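/- Let ρ and σ be density matrices of the same size and λ ∈ ℝ such that ρ ≼ 2^λ · σ in the Loewner order. Then the fidelity satisfies F(ρ,σ) ≥ 2^{−λ/2}, and consequently the purified distance satisfies P(ρ,σ) ≤ √(1 − 2^{−λ}). -/

import Mathlib

set_option maxHeartbeats 1000000

open Matrix
open scoped ComplexOrder Classical

namespace Matrix.PosSemidef

open scoped MatrixOrder

/-- The square root of a positive semidefinite matrix (as in the frozen `psdSqrt`). -/
noncomputable def sqrt {n : Type*} [Fintype n] [DecidableEq n] {A : Matrix n n ℂ}
    (hA : A.PosSemidef) : Matrix n n ℂ :=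
  hA.isHermitian.eigenvectorUnitary.1 *
    diagonal ((↑) ∘ (Real.sqrt ·) ∘ hA.isHermitian.eigenvalues) *
    (star hA.isHermitian.eigenvectorUnitary : Matrix n n ℂ)

lemma sqrt_eq_cfc {n : Type*} [Fintype n] [DecidableEq n] {A : Matrix n n ℂ}
    (hA : A.PosSemidef) : hA.sqrt = CFC.sqrt A := by
  rw [CFC.sqrt_eq_cfc, cfc_nnreal_eq_real _ A, hA.1.cfc_eq]
  simp [IsHermitian.cfc, sqrt, Unitary.conjStarAlgAut_apply]
  congr 3
  funext i
  simp only [Function.comp_apply]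
  rw [max_eq_left (hA.eigenvalues_nonneg i)]

lemma posSemidef_sqrt {n : Type*} [Fintype n] [DecidableEq n] {A : Matrix n n ℂ}
    (hA : A.PosSemidef) : hA.sqrt.PosSemidef := by
  rw [sqrt_eq_cfc]; exact (CFC.sqrt_nonneg A).posSemidef

lemma sqrt_mul_self {n : Type*} [Fintype n] [DecidableEq n] {A : Matrix n n ℂ}
    (hA : A.PosSemidef) : hA.sqrt * hA.sqrt = A := by
  rw [sqrt_eq_cfc]; exact CFC.sqrt_mul_sqrt_self A hA.nonneg

lemma eq_sqrt_of_sq_eq {n : Type*} [Fintype n] [DecidableEq n] {A B : Matrix n n ℂ}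
    (hA : A.PosSemidef) (hB : B.PosSemidef) (h : A ^ 2 = B) : A = hB.sqrt := by
  rw [sqrt_eq_cfc, ← h, CFC.sqrt_sq A hA.nonneg]

end Matrix.PosSemidef

lemma smul_posSemidef {n : Type*} [Fintype n] {M : Matrix n n ℂ} (hM : M.PosSemidef)
    {c : ℝ} (hc : 0 ≤ c) : ((c : ℂ) • M).PosSemidef := by
  refine .of_dotProduct_mulVec_nonneg ?_ ?_
  · unfold Matrix.IsHermitian
    rw [conjTranspose_smul, hM.1]
    simp
  · intro x
    rw [smul_mulVec, dotProduct_smul, smul_eq_mul]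
    have := hM.dotProduct_mulVec_nonneg x
    positivity

lemma trace_re_nonneg {n : Type*} [Fintype n] [DecidableEq n] {M : Matrix n n ℂ}
    (hM : M.PosSemidef) : 0 ≤ M.trace.re := by
  have h : ∀ i, 0 ≤ (M i i).re := by
    intro i
    have := hM.re_dotProduct_nonneg (Pi.single i 1)
    simpa [dotProduct, Pi.single_apply, apply_ite] using this
  have ht : M.trace = ∑ i, M i i := rfl
  rw [ht, Complex.re_sum]
  exact Finset.sum_nonneg fun i _ => h i

lemma sqrt_mono {n : Type*} [Fintype n] [DecidableEq n] {A B : Matrix n n ℂ}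
    (hA : A.PosSemidef) (hB : B.PosSemidef) (h : (B - A).PosSemidef) :
    (hB.sqrt - hA.sqrt).PosSemidef := by
  set S := hB.sqrt with hSdef
  set T := hA.sqrt with hTdef
  have hS := hB.posSemidef_sqrt
  have hT := hA.posSemidef_sqrt
  have hD : (S - T).IsHermitian := hS.1.sub hT.1
  simp only [hD.posSemidef_iff_eigenvalues_nonneg, Pi.le_def, Pi.zero_apply]
  intro i
  by_contra hneg
  push_neg at hneg
  set μ := hD.eigenvalues i
  set v : n → ℂ := ⇑(hD.eigenvectorBasis i) with hvdef
  have hv : (S - T) *ᵥ v = (μ : ℂ) • v := by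
    have := hD.mulVec_eigenvectorBasis i
    simpa [hvdef, ← Complex.coe_smul] using this
  have hvne : v ≠ 0 := by
    intro h0
    have hn := hD.eigenvectorBasis.orthonormal.1 i
    rw [show (hD.eigenvectorBasis i : EuclideanSpace ℂ n) = 0 from by ext j; simpa using congrFun h0 j, norm_zero] at hn
    norm_num at hn
  -- B - A = S * (S - T) + (S - T) * T
  have hBA : B - A = S * (S - T) + (S - T) * T := by
    rw [mul_sub, sub_mul, sub_add_sub_cancel, hB.sqrt_mul_self, hA.sqrt_mul_self]
  set p := star v ⬝ᵥ S *ᵥ v with hp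
  set q := star v ⬝ᵥ T *ᵥ v with hq
  have hkey : star v ⬝ᵥ (B - A) *ᵥ v = (μ : ℂ) * (p + q) := by
    rw [hBA, add_mulVec, dotProduct_add]
    have h1 : star v ⬝ᵥ (S * (S - T)) *ᵥ v = (μ : ℂ) * p := by
      rw [← mulVec_mulVec, hv, mulVec_smul, dotProduct_smul, smul_eq_mul]
    have h2 : star v ⬝ᵥ ((S - T) * T) *ᵥ v = (μ : ℂ) * q := by
      rw [← mulVec_mulVec, dotProduct_mulVec]
      have hrow : star v ᵥ* (S - T) = (μ : ℂ) • star v := by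
        have : star ((S - T)ᴴ *ᵥ v) = star v ᵥ* (S - T) := by
          rw [star_mulVec, conjTranspose_conjTranspose]
        rw [← this, hD.eq, hv, star_smul]
        simp
      rw [hrow, smul_dotProduct, smul_eq_mul]
    rw [h1, h2, mul_add]
  have hpos : 0 ≤ (μ : ℂ) * (p + q) := hkey ▸ h.dotProduct_mulVec_nonneg v
  have hppos : 0 ≤ p := hS.dotProduct_mulVec_nonneg v
  have hqpos : 0 ≤ q := hT.dotProduct_mulVec_nonneg v
  have hpq0 : p + q = 0 := by
    have hz : 0 ≤ p + q := add_nonneg hppos hqpos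
    rw [Complex.le_def] at hz hpos
    have hzre : 0 ≤ (p + q).re := by simpa using hz.1
    have hre : 0 ≤ μ * (p + q).re := by
      have := hpos.1
      simpa [Complex.mul_re] using this
    have h1 : (p + q).re ≤ 0 := by
      by_contra hlt
      push_neg at hlt
      have := mul_neg_of_neg_of_pos hneg hlt
      linarith
    apply Complex.ext
    · simp only [Complex.zero_re]; linarith
    · simp [← hz.2]
  have hp0 : p = 0 := by
    have : p ≤ 0 := by
      rw [eq_neg_of_add_eq_zero_left hpq0]
      exact neg_nonpos.mpr hqpos
    exact le_antisymm this hppos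
  have hq0 : q = 0 := by rw [hp0, zero_add] at hpq0; exact hpq0
  have hSv : S *ᵥ v = 0 := (hS.dotProduct_mulVec_zero_iff v).mp hp0
  have hTv : T *ᵥ v = 0 := (hT.dotProduct_mulVec_zero_iff v).mp hq0
  have : (μ : ℂ) • v = 0 := by
    rw [← hv, sub_mulVec, hSv, hTv, sub_zero]
  rcases smul_eq_zero.mp this with hμ | hv0
  · have : μ = 0 := by exact_mod_cast hμ
    linarith
  · exact hvne hv0

/-- A density matrix: a positive semidefinite matrix of trace 1. -/
def IsDensityMatrix {n : Type*} [Fintype n] (ρ : Matrix n n ℂ) : Prop :=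
  ρ.PosSemidef ∧ ρ.trace = 1

/-- The positive semidefinite square root of a matrix (junk value `0` if the matrix is
not positive semidefinite). -/
noncomputable def psdSqrt {n : Type*} [Fintype n] [DecidableEq n] (A : Matrix n n ℂ) :
    Matrix n n ℂ :=
  if hA : A.PosSemidef then
    hA.1.eigenvectorUnitary.1 * diagonal ((↑) ∘ (Real.sqrt ·) ∘ hA.1.eigenvalues) *
      (star hA.1.eigenvectorUnitary : Matrix n n ℂ)
  else 0

/-- Fidelity `F(ρ,σ) = Tr √(√ρ σ √ρ)`. -/
noncomputable def fidelity {n : Type*} [Fintype n] [DecidableEq n] (ρ σ : Matrix n n ℂ) : ℝ :=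
  ((psdSqrt (psdSqrt ρ * σ * psdSqrt ρ)).trace).re

/-- Purified distance `P(ρ,σ) = √(1 − F(ρ,σ)²)`. -/
noncomputable def purifiedDist {n : Type*} [Fintype n] [DecidableEq n]
    (ρ σ : Matrix n n ℂ) : ℝ :=
  Real.sqrt (1 - (fidelity ρ σ) ^ 2)

/-- If `ρ ≼ 2^λ · σ` in the Loewner order, then `F(ρ,σ) ≥ 2^{−λ/2}` and
`P(ρ,σ) ≤ √(1 − 2^{−λ})`. -/
theorem fidelity_ge_and_purifiedDist_le_of_dmax {n : Type*} [Fintype n] [DecidableEq n]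
    (ρ σ : Matrix n n ℂ) (hρ : IsDensityMatrix ρ) (hσ : IsDensityMatrix σ) (lam : ℝ)
    (hLoewner : ((((2:ℝ) ^ lam : ℝ) : ℂ) • σ - ρ).PosSemidef) :
    (2:ℝ) ^ (-(lam / 2)) ≤ fidelity ρ σ ∧
      purifiedDist ρ σ ≤ Real.sqrt (1 - (2:ℝ) ^ (-lam)) := by
  obtain ⟨hρps, hρtr⟩ := hρ
  obtain ⟨hσps, hσtr⟩ := hσ
  set c : ℝ := (2:ℝ) ^ (-(lam/2)) with hc
  have hc_pos : 0 < c := Real.rpow_pos_of_pos (by norm_num) _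
  have hc2 : c ^ 2 = (2:ℝ) ^ (-lam) := by
    rw [sq, ← Real.rpow_add (by norm_num : (0:ℝ) < 2)]
    ring_nf
  have hM : (hρps.sqrt * σ * hρps.sqrt).PosSemidef := by
    have := hσps.mul_mul_conjTranspose_same hρps.sqrt
    rwa [hρps.posSemidef_sqrt.1] at this
  set M := hρps.sqrt * σ * hρps.sqrt with hMdef
  -- conjugation of the Loewner inequality
  have h1 : ((((2:ℝ) ^ lam : ℝ) : ℂ) • M - ρ ^ 2).PosSemidef := by
    have := hLoewner.mul_mul_conjTranspose_same hρps.sqrt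
    rw [hρps.posSemidef_sqrt.1] at this
    have heq : hρps.sqrt * ((((2:ℝ) ^ lam : ℝ) : ℂ) • σ - ρ) * hρps.sqrt
        = (((2:ℝ) ^ lam : ℝ) : ℂ) • M - ρ ^ 2 := by
      have hρ2 : hρps.sqrt * ρ * hρps.sqrt = ρ ^ 2 := by
        obtain ⟨s, hs⟩ : ∃ s, s = hρps.sqrt := ⟨_, rfl⟩
        rw [← hs, show ρ = s * s from by rw [hs, hρps.sqrt_mul_self]]
        simp only [pow_two, mul_assoc]
      rw [mul_sub, sub_mul, mul_smul_comm, smul_mul_assoc, hρ2, hMdef]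
    rwa [heq] at this
  have hNps : ((((2:ℝ) ^ (-lam) : ℝ) : ℂ) • ρ ^ 2).PosSemidef :=
    smul_posSemidef (hρps.pow 2) (Real.rpow_nonneg (by norm_num) _)
  have h2 : (M - (((2:ℝ) ^ (-lam) : ℝ) : ℂ) • ρ ^ 2).PosSemidef := by
    have := smul_posSemidef h1 (Real.rpow_nonneg (by norm_num : (0:ℝ) ≤ 2) (-lam))
    have heq : (((2:ℝ) ^ (-lam) : ℝ) : ℂ) • ((((2:ℝ) ^ lam : ℝ) : ℂ) • M - ρ ^ 2)
        = M - (((2:ℝ) ^ (-lam) : ℝ) : ℂ) • ρ ^ 2 := by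
      rw [smul_sub, smul_smul, ← Complex.ofReal_mul,
        ← Real.rpow_add (by norm_num : (0:ℝ) < 2)]
      norm_num
    rwa [heq] at this
  have hA2 : (((c:ℝ) : ℂ) • ρ).PosSemidef := smul_posSemidef hρps hc_pos.le
  have hsq : (((c:ℝ) : ℂ) • ρ) ^ 2 = (((2:ℝ) ^ (-lam) : ℝ) : ℂ) • ρ ^ 2 := by
    rw [smul_pow, ← Complex.ofReal_pow, hc2]
  have hsqrtN : ((c:ℝ) : ℂ) • ρ = hNps.sqrt := hA2.eq_sqrt_of_sq_eq hNps hsq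
  have hmono := sqrt_mono hNps hM h2
  rw [← hsqrtN] at hmono
  have htr : 0 ≤ (hM.sqrt - ((c:ℝ) : ℂ) • ρ).trace.re := trace_re_nonneg hmono
  have htr2 : (hM.sqrt - ((c:ℝ) : ℂ) • ρ).trace.re = hM.sqrt.trace.re - c := by
    rw [trace_sub, trace_smul, hρtr, Complex.sub_re]
    simp
  have hps : psdSqrt ρ = hρps.sqrt := dif_pos hρps
  have hF : fidelity ρ σ = hM.sqrt.trace.re := by
    rw [fidelity, hps, show psdSqrt (hρps.sqrt * σ * hρps.sqrt) = hM.sqrt from dif_pos hM]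
  have hFge : c ≤ fidelity ρ σ := by
    rw [hF]; linarith [htr2 ▸ htr]
  refine ⟨hFge, ?_⟩
  rw [purifiedDist]
  apply Real.sqrt_le_sqrt
  have : c ^ 2 ≤ (fidelity ρ σ) ^ 2 := by nlinarith
  linarith [hc2 ▸ this]
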